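/- Let F be a feasible R-special directed solution, and for each v ∈ R let I_v denote the v-bad interval. Then the family of all v-bad intervals {I_v : v ∈ R} is laminar. -/
import Mathlib


/-- `Reach F u v`: there is a directed path of links of `F` from `u` to `v`. -/
def Reach (F : Finset (ℕ × ℕ)) (u v : ℕ) : Prop :=
  Relation.ReflTransGen (fun a b => (a, b) ∈ F) u v

/-- A directed link `(u,v)` enters a cut `C` if `v ∈ C` and `u ∉ C`. -/
def Enters (f : ℕ × ℕ) (C : Set ℕ) : Prop := f.2 ∈ C ∧ f.1 ∉ C

/-- Two directed links cross if their intervals `[a,b]`, `[c,d]` satisfy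
`a < c < b < d` or `c < a < d < b`. -/
def Crosses (f g : ℕ × ℕ) : Prop :=
  (min f.1 f.2 < min g.1 g.2 ∧ min g.1 g.2 < max f.1 f.2 ∧ max f.1 f.2 < max g.1 g.2) ∨
    (min g.1 g.2 < min f.1 f.2 ∧ min f.1 f.2 < max g.1 g.2 ∧ max g.1 g.2 < max f.1 f.2)

/-- `F` is an `R`-special directed solution (with root `r = 0`):
(1) the endpoints of every link are distinct and lie in `R`;
(2) `(R, F)` is an `r`-out arborescence;
(3) no two links of `F` cross;
(4) no two links of `F` leaving the same vertex go in the same direction. -/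
def RSpecial (R : Finset ℕ) (F : Finset (ℕ × ℕ)) : Prop :=
  (∀ f ∈ F, f.1 ≠ f.2 ∧ f.1 ∈ R ∧ f.2 ∈ R) ∧
    (∀ f ∈ F, f.2 ≠ 0) ∧
    (∀ v ∈ R, v ≠ 0 → ∃! f : ℕ × ℕ, f ∈ F ∧ f.2 = v) ∧
    (∀ v ∈ R, Reach F 0 v) ∧
    (∀ f ∈ F, ∀ g ∈ F, f ≠ g → ¬Crosses f g) ∧
    (∀ f ∈ F, ∀ g ∈ F, f ≠ g → f.1 = g.1 →
      ¬((f.1 < f.2 ∧ g.1 < g.2) ∨ (f.2 < f.1 ∧ g.2 < g.1)))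

/-- A ring-cut is an interval `{a, …, b}` with `1 ≤ a ≤ b ≤ n-1`. -/
def IsRingCut (n : ℕ) (C : Set ℕ) : Prop :=
  ∃ a b : ℕ, 1 ≤ a ∧ a ≤ b ∧ b ≤ n - 1 ∧ C = Set.Icc a b

/-- `F` is feasible: every dangerous ring-cut is entered by some link of `F`. -/
def FeasibleDir (n : ℕ) (R : Finset ℕ) (F : Finset (ℕ × ℕ)) : Prop :=
  ∀ C : Set ℕ, IsRingCut n C → (C ∩ ↑R).Nonempty → ∃ f ∈ F, Enters f C

/-- A link `f = (u,v) ∈ F` is responsible for a cut `C` if it enters `C` and no link on the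
unique directed path in `(R,F)` from the root to `u` (i.e. no link of `F` whose head is an
ancestor of `u`) enters `C`. -/
def Responsible (F : Finset (ℕ × ℕ)) (f : ℕ × ℕ) (C : Set ℕ) : Prop :=
  f ∈ F ∧ Enters f C ∧ ∀ g ∈ F, Reach F g.2 f.1 → ¬Enters g C

/-- `[a, b]` is the `v`-bad interval `I_v`: the maximal interval of `V(H)` containing `v`
that contains no terminal which is not a descendant of `v`. -/
def IsBadInterval (n : ℕ) (R : Finset ℕ) (F : Finset (ℕ × ℕ)) (v a b : ℕ) : Prop :=
  a ≤ v ∧ v ≤ b ∧ b ≤ n - 1 ∧ (∀ w ∈ R, a ≤ w → w ≤ b → Reach F v w) ∧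
    ∀ a' b' : ℕ, a' ≤ a → b ≤ b' → b' ≤ n - 1 →
      (∀ w ∈ R, a' ≤ w → w ≤ b' → Reach F v w) → a' = a ∧ b' = b

def ReachLen (F : Finset (ℕ × ℕ)) : ℕ → ℕ → ℕ → Prop
  | 0, u, v => u = v
  | k+1, u, v => ∃ m, (u, m) ∈ F ∧ ReachLen F k m v

lemma rl_zero {F : Finset (ℕ × ℕ)} {u v : ℕ} : ReachLen F 0 u v ↔ u = v := Iff.rfl

lemma rl_succ {F : Finset (ℕ × ℕ)} {k u v : ℕ} :
    ReachLen F (k+1) u v ↔ ∃ m, (u, m) ∈ F ∧ ReachLen F k m v := Iff.rfl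

lemma rl_reach {F : Finset (ℕ × ℕ)} {k u v : ℕ} (h : ReachLen F k u v) : Reach F u v := by
  induction k generalizing u with
  | zero => rw [rl_zero] at h; subst h; exact Relation.ReflTransGen.refl
  | succ k ih =>
      obtain ⟨m, hm, h⟩ := rl_succ.mp h
      exact Relation.ReflTransGen.head hm (ih h)

lemma rl_snoc {F : Finset (ℕ × ℕ)} {k u v w : ℕ} (h : ReachLen F k u v) (hl : (v, w) ∈ F) :
    ReachLen F (k+1) u w := by
  induction k generalizing u with
  | zero => rw [rl_zero] at h; subst h; exact rl_succ.mpr ⟨w, hl, rfl⟩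
  | succ k ih =>
      obtain ⟨m, hm, h⟩ := rl_succ.mp h
      exact rl_succ.mpr ⟨m, hm, ih h⟩

lemma rl_of_reach {F : Finset (ℕ × ℕ)} {u v : ℕ} (h : Reach F u v) : ∃ k, ReachLen F k u v := by
  induction h with
  | refl => exact ⟨0, rfl⟩
  | tail hab hbc ih => obtain ⟨k, hk⟩ := ih; exact ⟨k+1, rl_snoc hk hbc⟩

lemma rl_last {F : Finset (ℕ × ℕ)} {k u v : ℕ} (h : ReachLen F (k+1) u v) :
    ∃ c, ReachLen F k u c ∧ (c, v) ∈ F := by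
  induction k generalizing u with
  | zero =>
      obtain ⟨m, hm, h⟩ := rl_succ.mp h
      rw [rl_zero] at h; subst h; exact ⟨u, rfl, hm⟩
  | succ k ih =>
      obtain ⟨m, hm, h⟩ := rl_succ.mp h
      obtain ⟨c, hc, hcv⟩ := ih h
      exact ⟨c, rl_succ.mpr ⟨m, hm, hc⟩, hcv⟩

lemma rl_append {F : Finset (ℕ × ℕ)} {i j a b c : ℕ}
    (hab : ReachLen F i a b) (hbc : ReachLen F j b c) : ReachLen F (i + j) a c := by
  induction i generalizing a with
  | zero => rw [rl_zero] at hab; subst hab; simpa using hbc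
  | succ i ih =>
      obtain ⟨m, hm, h⟩ := rl_succ.mp hab
      have : i + 1 + j = (i + j) + 1 := by omega
      rw [this]
      exact rl_succ.mpr ⟨m, hm, ih h⟩

lemma rl_entry {F : Finset (ℕ × ℕ)} {I : Set ℕ} :
    ∀ k a b, ReachLen F k a b → a ∉ I → b ∈ I →
      ∃ x y j, (x, y) ∈ F ∧ x ∉ I ∧ y ∈ I ∧ Reach F a x ∧ j < k ∧ ReachLen F j y b := by
  intro k
  induction k with
  | zero => intro a b h ha hb; rw [rl_zero] at h; subst h; exact absurd hb ha
  | succ k ih =>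
      intro a b h ha hb
      obtain ⟨m, hm, h⟩ := rl_succ.mp h
      by_cases hmI : m ∈ I
      · exact ⟨a, m, k, hm, ha, hmI, Relation.ReflTransGen.refl, Nat.lt_succ_self k, h⟩
      · obtain ⟨x, y, j, h1, h2, h3, h4, h5, h6⟩ := ih m b h hmI hb
        exact ⟨x, y, j, h1, h2, h3, Relation.ReflTransGen.head hm h4, Nat.lt_succ_of_lt h5, h6⟩

lemma rl_crosses_pairs {a b c d : ℕ}
    (h : (min a b < min c d ∧ min c d < max a b ∧ max a b < max c d) ∨
      (min c d < min a b ∧ min a b < max c d ∧ max c d < max a b)) :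
    Crosses (a, b) (c, d) := h

lemma rl_comp {R : Finset ℕ} {F : Finset (ℕ × ℕ)}
    (h1 : ∀ f ∈ F, f.1 ≠ f.2 ∧ f.1 ∈ R ∧ f.2 ∈ R)
    (h2 : ∀ f ∈ F, f.2 ≠ 0)
    (h3 : ∀ v ∈ R, v ≠ 0 → ∃! f : ℕ × ℕ, f ∈ F ∧ f.2 = v) :
    ∀ k t m x y, ReachLen F k x t → ReachLen F m y t → Reach F x y ∨ Reach F y x := by
  intro k
  induction k with
  | zero =>
      intro t m x y hx hy
      rw [rl_zero] at hx; subst hx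
      exact Or.inr (rl_reach hy)
  | succ k ih =>
      intro t m x y hx hy
      cases m with
      | zero =>
          rw [rl_zero] at hy; subst hy
          exact Or.inl (rl_reach hx)
      | succ m =>
          obtain ⟨c, hxc, hct⟩ := rl_last hx
          obtain ⟨c', hyc', hc't⟩ := rl_last hy
          have htR : t ∈ R := (h1 _ hct).2.2
          have ht0 : t ≠ 0 := h2 _ hct
          obtain ⟨f, _, huniq⟩ := h3 t htR ht0
          have e1 : (c, t) = f := huniq _ ⟨hct, rfl⟩
          have e2 : (c', t) = f := huniq _ ⟨hc't, rfl⟩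
          have hcc : c' = c := congrArg Prod.fst (e2.trans e1.symm)
          exact ih c m x y hxc (hcc ▸ hyc')

lemma rl_nocycle {R : Finset ℕ} {F : Finset (ℕ × ℕ)}
    (h1 : ∀ f ∈ F, f.1 ≠ f.2 ∧ f.1 ∈ R ∧ f.2 ∈ R)
    (h2 : ∀ f ∈ F, f.2 ≠ 0)
    (h3 : ∀ v ∈ R, v ≠ 0 → ∃! f : ℕ × ℕ, f ∈ F ∧ f.2 = v) :
    ∀ k x m, ReachLen F k 0 x → ReachLen F (m+1) x x → False := by
  intro k
  induction k with
  | zero =>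
      intro x m h0 hc
      rw [rl_zero] at h0; subst h0
      obtain ⟨c, _, hcx⟩ := rl_last hc
      exact h2 _ hcx rfl
  | succ k ih =>
      intro x m h0 hc
      obtain ⟨c2, h0c2, hc2x⟩ := rl_last h0
      obtain ⟨c, hxc, hcx⟩ := rl_last hc
      have hxR : x ∈ R := (h1 _ hcx).2.2
      have hx0 : x ≠ 0 := h2 _ hcx
      obtain ⟨f, _, huniq⟩ := h3 x hxR hx0
      have e1 : (c, x) = f := huniq _ ⟨hcx, rfl⟩
      have e2 : (c2, x) = f := huniq _ ⟨hc2x, rfl⟩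
      have hcc : c2 = c := congrArg Prod.fst (e2.trans e1.symm)
      exact ih c m (hcc ▸ h0c2) (rl_succ.mpr ⟨x, hcx, hxc⟩)
lemma rl_main {R : Finset ℕ} {F : Finset (ℕ × ℕ)}
    (h1 : ∀ f ∈ F, f.1 ≠ f.2 ∧ f.1 ∈ R ∧ f.2 ∈ R)
    (h2 : ∀ f ∈ F, f.2 ≠ 0)
    (h3 : ∀ v ∈ R, v ≠ 0 → ∃! f : ℕ × ℕ, f ∈ F ∧ f.2 = v)
    (h4 : ∀ v ∈ R, Reach F 0 v)
    (h5 : ∀ f ∈ F, ∀ g ∈ F, f ≠ g → ¬Crosses f g)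
    (h6 : ∀ f ∈ F, ∀ g ∈ F, f ≠ g → f.1 = g.1 →
      ¬((f.1 < f.2 ∧ g.1 < g.2) ∨ (f.2 < f.1 ∧ g.2 < g.1)))
    (p q : ℕ) (hpR : p ∈ R) (hqR : q ∈ R) (hpq : p < q)
    (hntb : ∀ t ∈ R, ¬(p < t ∧ t < q))
    (hA : ¬Reach F p q) (hB : ¬Reach F q p) :
    ∀ k c, c ∈ R → c ≤ p → Reach F c p → ReachLen F k c q → False := by
  intro k
  induction k using Nat.strong_induction_on with
  | _ k ih =>
  intro c hcR hcp hcrp hlen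
  -- Round 1: first link crossing the gap on the path c → q
  obtain ⟨x1, y1, j, he1, hx1I, hy1I, hcx1, hjk, hy1q⟩ :=
    rl_entry (I := {x : ℕ | q ≤ x}) k c q hlen
      (by simp only [Set.mem_setOf_eq]; omega) (by simp only [Set.mem_setOf_eq]; omega)
  simp only [Set.mem_setOf_eq] at hx1I hy1I
  have hx1R : x1 ∈ R := (h1 _ he1).2.1
  have hy1R : y1 ∈ R := (h1 _ he1).2.2
  have hx1p : x1 ≤ p := by have := hntb x1 hx1R; omega
  have hx1q : Reach F x1 q := Relation.ReflTransGen.head he1 (rl_reach hy1q)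
  have hx1p' : x1 < p := by
    rcases Nat.lt_or_ge x1 p with h | h
    · exact h
    · exfalso
      have hxe : x1 = p := by omega
      exact hA (hxe ▸ hx1q)
  have hx1y1 : x1 < y1 := by omega
  -- entry of the path 0 → p into the open interval (x1, y1)
  obtain ⟨kp, hkp⟩ := rl_of_reach (h4 p hpR)
  obtain ⟨x, hh, j0, hg, hxnot, hhin, _, _, hhp'⟩ :=
    rl_entry (I := {z : ℕ | x1 < z ∧ z < y1}) kp 0 p hkp
      (by simp only [Set.mem_setOf_eq]; omega) (by simp only [Set.mem_setOf_eq]; omega)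
  simp only [Set.mem_setOf_eq] at hxnot hhin
  have hhp : Reach F hh p := rl_reach hhp'
  have hge : (x, hh) ≠ (x1, y1) := by
    intro hEq
    have : hh = y1 := congrArg Prod.snd hEq
    omega
  rcases Nat.lt_trichotomy x x1 with hlt | heq | hgt
  · exact h5 _ hg _ he1 hge (rl_crosses_pairs (by omega))
  · exact h6 _ hg _ he1 hge heq
      (Or.inl ⟨show x < hh by omega, show x1 < y1 by omega⟩)
  · have hy1x : y1 ≤ x := by omega
    rcases Nat.lt_or_ge y1 x with hgt2 | hle2
    · exact h5 _ hg _ he1 hge (rl_crosses_pairs (by omega))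
    · have hxy1 : x = y1 := by omega
      have hg' : (y1, hh) ∈ F := hxy1 ▸ hg
      have hy1p : Reach F y1 p := Relation.ReflTransGen.head hg' hhp
      have hy1gtq : q < y1 := by
        rcases Nat.eq_or_lt_of_le hy1I with h | h
        · exfalso; exact hB (by rw [h]; exact hy1p)
        · exact h
      -- Round 2: first link crossing the gap (leftward) on the path y1 → p
      obtain ⟨k2, hk2⟩ := rl_of_reach hy1p
      obtain ⟨x2, y2, j2, he2, hx2I, hy2I, hy1x2, _, hy2p'⟩ :=
        rl_entry (I := {z : ℕ | z ≤ p}) k2 y1 p hk2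
          (by simp only [Set.mem_setOf_eq]; omega) (by simp only [Set.mem_setOf_eq]; omega)
      simp only [Set.mem_setOf_eq] at hx2I hy2I
      have hx2R : x2 ∈ R := (h1 _ he2).2.1
      have hy2R : y2 ∈ R := (h1 _ he2).2.2
      have hy2p : Reach F y2 p := rl_reach hy2p'
      have hx2q : q ≤ x2 := by have := hntb x2 hx2R; omega
      have hx2q' : q < x2 := by
        rcases Nat.eq_or_lt_of_le hx2q with h | h
        · exfalso
          exact hB (by rw [h]; exact Relation.ReflTransGen.head he2 hy2p)
        · exact h
      rcases Nat.lt_or_ge y1 x2 with hcaseB | hcaseA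
      · -- y1 strictly inside (y2, x2): entry of path 0 → y1, then cycle or violations
        obtain ⟨k3, hk3⟩ := rl_of_reach (h4 y1 hy1R)
        obtain ⟨x5, t5, j5, hg3, hx5I, ht5I, _, _, ht5y1'⟩ :=
          rl_entry (I := {z : ℕ | y2 < z ∧ z < x2}) k3 0 y1 hk3
            (by simp only [Set.mem_setOf_eq]; omega) (by simp only [Set.mem_setOf_eq]; omega)
        simp only [Set.mem_setOf_eq] at hx5I ht5I
        have hge3 : (x5, t5) ≠ (x2, y2) := by
          intro hEq
          have : t5 = y2 := congrArg Prod.snd hEq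
          omega
        rcases Nat.lt_trichotomy x5 y2 with hlt5 | heq5 | hgt5
        · exact h5 _ hg3 _ he2 hge3 (rl_crosses_pairs (by omega))
        · -- x5 = y2 : cycle y2 → y1 → x2 → y2
          have hg3' : (y2, t5) ∈ F := heq5 ▸ hg3
          have hy2y1 : Reach F y2 y1 := Relation.ReflTransGen.head hg3' (rl_reach ht5y1')
          obtain ⟨ka, hka⟩ := rl_of_reach hy2y1
          obtain ⟨kb, hkb⟩ := rl_of_reach hy1x2
          have hcyc : ReachLen F (ka + kb + 1) y2 y2 := rl_snoc (rl_append hka hkb) he2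
          obtain ⟨k0, hk0⟩ := rl_of_reach (h4 y2 hy2R)
          exact rl_nocycle h1 h2 h3 k0 y2 (ka + kb) hk0 hcyc
        · have hx5ge : x2 ≤ x5 := by omega
          rcases Nat.eq_or_lt_of_le hx5ge with heq5 | hlt5
          · exact h6 _ hg3 _ he2 hge3 heq5.symm
              (Or.inr ⟨show t5 < x5 by omega, show y2 < x2 by omega⟩)
          · exact h5 _ hg3 _ he2 hge3 (rl_crosses_pairs (by omega))
      · -- x2 ≤ y1 : entry of the path y1 → q into (y2, x2); recurse or violations
        obtain ⟨x4, t4, j', hg2, hx4I, ht4I, _, hj', ht4q⟩ :=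
          rl_entry (I := {z : ℕ | y2 < z ∧ z < x2}) j y1 q hy1q
            (by simp only [Set.mem_setOf_eq]; omega) (by simp only [Set.mem_setOf_eq]; omega)
        simp only [Set.mem_setOf_eq] at hx4I ht4I
        have hge2 : (x4, t4) ≠ (x2, y2) := by
          intro hEq
          have : t4 = y2 := congrArg Prod.snd hEq
          omega
        rcases Nat.lt_trichotomy x4 y2 with hlt4 | heq4 | hgt4
        · exact h5 _ hg2 _ he2 hge2 (rl_crosses_pairs (by omega))
        · -- x4 = y2 : recurse with c' := y2
          have hg2' : (y2, t4) ∈ F := heq4 ▸ hg2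
          exact ih (j' + 1) (by omega) y2 hy2R hy2I hy2p (rl_succ.mpr ⟨t4, hg2', ht4q⟩)
        · have hx4ge : x2 ≤ x4 := by omega
          rcases Nat.eq_or_lt_of_le hx4ge with heq4 | hlt4
          · exact h6 _ hg2 _ he2 hge2 heq4.symm
              (Or.inr ⟨show t4 < x4 by omega, show y2 < x2 by omega⟩)
          · exact h5 _ hg2 _ he2 hge2 (rl_crosses_pairs (by omega))

lemma rl_key (n : ℕ) {R : Finset ℕ} {F : Finset (ℕ × ℕ)} (hr : 0 ∈ R)
    (hsp : RSpecial R F)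
    {v w a b a' b' : ℕ}
    (hv : IsBadInterval n R F v a b) (hw : IsBadInterval n R F w a' b')
    (h1 : a < a') (h2 : b < b') (h3 : a' ≤ b) : False := by
  obtain ⟨hsp1, hsp2, hsp3, hsp4, hsp5, hsp6⟩ := hsp
  obtain ⟨hav, hvb, hbn, hvall, hvmax⟩ := hv
  obtain ⟨ha'w, hwb', hb'n, hwall, hwmax⟩ := hw
  -- q := b + 1 is a terminal not reachable from v
  have hx : ∃ t ∈ R, a ≤ t ∧ t ≤ b + 1 ∧ ¬Reach F v t := by
    by_contra hcon
    push_neg at hcon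
    have := hvmax a (b + 1) le_rfl (by omega) (by omega)
      (fun t ht u1 u2 => hcon t ht u1 u2)
    omega
  obtain ⟨t, htR, hta, htb, htv⟩ := hx
  have htq : t = b + 1 := by
    by_contra hne
    exact htv (hvall t htR hta (by omega))
  have hqR : b + 1 ∈ R := htq ▸ htR
  have hqv : ¬Reach F v (b + 1) := htq ▸ htv
  -- p := a' - 1 is a terminal not reachable from w
  have hx' : ∃ s ∈ R, a' - 1 ≤ s ∧ s ≤ b' ∧ ¬Reach F w s := by
    by_contra hcon
    push_neg at hcon
    have := hwmax (a' - 1) b' (by omega) le_rfl hb'n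
      (fun t ht u1 u2 => hcon t ht u1 u2)
    omega
  obtain ⟨s, hsR, hsa, hsb, hsw⟩ := hx'
  have hsp' : s = a' - 1 := by
    by_contra hne
    exact hsw (hwall s hsR (by omega) hsb)
  have hpR : a' - 1 ∈ R := hsp' ▸ hsR
  have hpw : ¬Reach F w (a' - 1) := hsp' ▸ hsw
  have hvp : Reach F v (a' - 1) := hvall (a' - 1) hpR (by omega) (by omega)
  have hwq : Reach F w (b + 1) := hwall (b + 1) hqR (by omega) (by omega)
  have hA : ¬Reach F (a' - 1) (b + 1) := fun h => hqv (hvp.trans h)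
  have hB : ¬Reach F (b + 1) (a' - 1) := fun h => hpw (hwq.trans h)
  have hntb : ∀ t ∈ R, ¬(a' - 1 < t ∧ t < b + 1) := by
    intro t ht hcon
    have hrv : Reach F v t := hvall t ht (by omega) (by omega)
    have hrw : Reach F w t := hwall t ht (by omega) (by omega)
    obtain ⟨kk, hkk⟩ := rl_of_reach hrv
    obtain ⟨mm, hmm⟩ := rl_of_reach hrw
    rcases rl_comp hsp1 hsp2 hsp3 kk t mm v w hkk hmm with hvw | hwv
    · exact hqv (hvw.trans hwq)
    · exact hpw (hwv.trans hvp)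
  obtain ⟨k, hk⟩ := rl_of_reach (hsp4 (b + 1) hqR)
  exact rl_main hsp1 hsp2 hsp3 hsp4 hsp5 hsp6 (a' - 1) (b + 1) hpR hqR (by omega)
    hntb hA hB k 0 hr (by omega) (hsp4 (a' - 1) hpR) hk

/-- For a feasible `R`-special directed solution, the family of `v`-bad intervals
`{I_v : v ∈ R}` is laminar. -/
theorem stmt10 (n : ℕ) (hn : 3 ≤ n) (R : Finset ℕ) (hR : R ⊆ Finset.range n) (hr : 0 ∈ R)
    (F : Finset (ℕ × ℕ)) (hsp : RSpecial R F) (hfeas : FeasibleDir n R F) :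
    ∀ v ∈ R, ∀ w ∈ R, ∀ a b a' b' : ℕ,
      IsBadInterval n R F v a b → IsBadInterval n R F w a' b' →
      (Set.Icc a b ⊆ Set.Icc a' b' ∨ Set.Icc a' b' ⊆ Set.Icc a b ∨
        Set.Icc a b ∩ Set.Icc a' b' = ∅) := by
  intro v hv w hw a b a' b' hvI hwI
  by_contra hcon
  push_neg at hcon
  obtain ⟨hs1, hs2, hne⟩ := hcon
  obtain ⟨x, hx⟩ := hne
  simp only [Set.mem_inter_iff, Set.mem_Icc] at hx
  obtain ⟨⟨hxa, hxb⟩, hxa', hxb'⟩ := hx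
  have hc1 : a < a' ∨ b' < b := by
    by_contra hcc
    push_neg at hcc
    exact hs1 (Set.Icc_subset_Icc hcc.1 hcc.2)
  have hc2 : a' < a ∨ b < b' := by
    by_contra hcc
    push_neg at hcc
    exact hs2 (Set.Icc_subset_Icc hcc.1 hcc.2)
  rcases hc1 with h1 | h1 <;> rcases hc2 with h2 | h2
  · omega
  · exact rl_key n hr hsp hvI hwI h1 h2 (by omega)
  · exact rl_key n hr hsp hwI hvI h2 h1 (by omega)
  · omega
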